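/- Let n be odd and J ⊆ F_2^{n-1} be the set of even-weight strings whose last coordinate is 0. Define C_0 = span{ (|x⟩ + |x̄⟩)(|0⟩+|1⟩)/2 : x ∈ J } and C_1 = span{ (|x⟩ − |x̄⟩)(|0⟩−|1⟩)/2 : x ∈ J }, where x̄ is the bitwise complement of x. Then C_0 and C_1 are orthogonal subspaces of (C^2)^{⊗n}, each of dimension 2^{n-3}, and the hybrid code {C_0, C_1} detects every single-qubit Pauli error: for any Pauli operator E of weight 1, ⟨u|E|v⟩ = 0 for all unit u ∈ C_0, v ∈ C_1, and ⟨c_i|E|c_j⟩ = λ_E^{(a)} δ_{ij} within each C_a. Hence there exists an [[n, n-3 : 1, 2]]_2 hybrid code. -/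

import Mathlib

open Matrix Finset
open scoped InnerProductSpace

/-- Single-qubit Pauli matrices, indexed by `ZMod 2`. -/
def sigmaX : Matrix (ZMod 2) (ZMod 2) ℂ := fun i j => if i = j then 0 else 1
def sigmaY : Matrix (ZMod 2) (ZMod 2) ℂ :=
  fun i j => if i = j then 0 else if i = 0 then -Complex.I else Complex.I
def sigmaZ : Matrix (ZMod 2) (ZMod 2) ℂ :=
  fun i j => if i = j then (if i = 0 then 1 else -1) else 0

/-- The weight-one operator acting as the `2 × 2` matrix `P` on qubit `ℓ`. -/
def opAt (n : ℕ) (ℓ : Fin n) (P : Matrix (ZMod 2) (ZMod 2) ℂ) :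
    Matrix (Fin n → ZMod 2) (Fin n → ZMod 2) ℂ :=
  fun y z => if ∀ j, j ≠ ℓ → y j = z j then P (y ℓ) (z ℓ) else 0

/-- Computational basis vector `|y⟩` of `(ℂ²)^{⊗(m+3)}`. -/
noncomputable def bvec (m : ℕ) (y : Fin (m + 3) → ZMod 2) :
    EuclideanSpace ℂ (Fin (m + 3) → ZMod 2) := EuclideanSpace.single y 1

/-- Bitwise complement on the first `m+2` qubits. -/
def compl' (m : ℕ) (x : Fin (m + 2) → ZMod 2) : Fin (m + 2) → ZMod 2 :=
  fun j => x j + 1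

/-- `|c_x^{(0)}⟩ = (|x⟩ + |x̄⟩)(|0⟩ + |1⟩)/2`. -/
noncomputable def c0 (m : ℕ) (x : Fin (m + 2) → ZMod 2) :
    EuclideanSpace ℂ (Fin (m + 3) → ZMod 2) :=
  (1 / 2 : ℂ) • (bvec m (Fin.snoc x 0) + bvec m (Fin.snoc x 1) +
    bvec m (Fin.snoc (compl' m x) 0) + bvec m (Fin.snoc (compl' m x) 1))

/-- `|c_x^{(1)}⟩ = (|x⟩ − |x̄⟩)(|0⟩ − |1⟩)/2`. -/
noncomputable def c1 (m : ℕ) (x : Fin (m + 2) → ZMod 2) :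
    EuclideanSpace ℂ (Fin (m + 3) → ZMod 2) :=
  (1 / 2 : ℂ) • (bvec m (Fin.snoc x 0) - bvec m (Fin.snoc x 1) -
    bvec m (Fin.snoc (compl' m x) 0) + bvec m (Fin.snoc (compl' m x) 1))

/-- `J`: even-weight strings of length `m+2` whose last coordinate is `0`. -/
def Jset (m : ℕ) : Set (Fin (m + 2) → ZMod 2) :=
  {x | Even ((univ.filter (fun j => x j = 1)).card) ∧ x (Fin.last (m + 1)) = 0}

section Helpers

lemma zmod2_cases : ∀ t : ZMod 2, t = 0 ∨ t = 1 := by decide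

lemma zmod2_add_self : ∀ t : ZMod 2, t + t = 0 := by decide

lemma inner_bvec_toEuclideanLin (m : ℕ)
    (M : Matrix (Fin (m+3) → ZMod 2) (Fin (m+3) → ZMod 2) ℂ)
    (y z : Fin (m+3) → ZMod 2) :
    ⟪bvec m y, Matrix.toEuclideanLin M (bvec m z)⟫_ℂ = M y z := by
  rw [bvec, bvec, EuclideanSpace.inner_single_left, Matrix.toEuclideanLin_apply,
    EuclideanSpace.ofLp_single, Matrix.mulVec_single]
  simp [PiLp.toLp_apply]

lemma snoc_inj {n : ℕ} {a b : Fin n → ZMod 2} {i j : ZMod 2} :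
    (Fin.snoc a i : Fin (n+1) → ZMod 2) = Fin.snoc b j ↔ a = b ∧ i = j := by
  constructor
  · intro h
    refine ⟨funext fun k => ?_, ?_⟩
    · have := congrFun h k.castSucc; simpa using this
    · have := congrFun h (Fin.last n); simpa using this
  · rintro ⟨rfl, rfl⟩; rfl

lemma opAt_last (m : ℕ) (P : Matrix (ZMod 2) (ZMod 2) ℂ)
    (a b : Fin (m+2) → ZMod 2) (i j : ZMod 2) :
    opAt (m+3) (Fin.last (m+2)) P (Fin.snoc a i) (Fin.snoc b j)
      = if a = b then P i j else 0 := by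
  unfold opAt
  have hc : (∀ k : Fin (m+3), k ≠ Fin.last (m+2) →
      (Fin.snoc a i : Fin (m+3) → ZMod 2) k = (Fin.snoc b j : Fin (m+3) → ZMod 2) k) ↔ a = b := by
    constructor
    · intro h
      funext k
      have := h k.castSucc (Fin.castSucc_lt_last k).ne
      simpa using this
    · rintro rfl k hk
      obtain ⟨k', rfl⟩ := Fin.exists_castSucc_eq.mpr hk
      simp
  simp only [hc, Fin.snoc_last]

lemma opAt_castSucc (m : ℕ) (P : Matrix (ZMod 2) (ZMod 2) ℂ) (ℓ : Fin (m+2))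
    (a b : Fin (m+2) → ZMod 2) (i j : ZMod 2) :
    opAt (m+3) ℓ.castSucc P (Fin.snoc a i) (Fin.snoc b j)
      = if i = j ∧ (∀ k, k ≠ ℓ → a k = b k) then P (a ℓ) (b ℓ) else 0 := by
  unfold opAt
  have hc : (∀ k : Fin (m+3), k ≠ ℓ.castSucc →
      (Fin.snoc a i : Fin (m+3) → ZMod 2) k = (Fin.snoc b j : Fin (m+3) → ZMod 2) k)
      ↔ (i = j ∧ ∀ k, k ≠ ℓ → a k = b k) := by
    constructor
    · intro h
      refine ⟨?_, fun k hk => ?_⟩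
      · have := h (Fin.last (m+2)) (Fin.castSucc_lt_last ℓ).ne'
        simpa using this
      · have := h k.castSucc (by simpa [Fin.castSucc_inj] using hk)
        simpa using this
    · rintro ⟨rfl, h⟩ k hk
      rcases Fin.eq_castSucc_or_eq_last k with ⟨k', rfl⟩ | rfl
      · have hk' : k' ≠ ℓ := by simpa [Fin.castSucc_inj] using hk
        simp [h k' hk']
      · simp
  simp only [hc, Fin.snoc_castSucc]

/-- parity of a bit string. -/
def par {n : ℕ} (x : Fin n → ZMod 2) : ZMod 2 := ∑ j, x j

lemma even_iff_par {n : ℕ} (x : Fin n → ZMod 2) :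
    Even ((univ.filter (fun j => x j = 1)).card) ↔ par x = 0 := by
  have h1 : par x = (((univ.filter (fun j => x j = 1)).card : ℕ) : ZMod 2) := by
    rw [par, ← Finset.sum_filter_add_sum_filter_not univ (fun j => x j = 1)]
    have h2 : ∑ j ∈ univ.filter (fun j => ¬ x j = 1), x j = 0 :=
      Finset.sum_eq_zero fun j hj =>
        (zmod2_cases (x j)).resolve_right (Finset.mem_filter.mp hj).2
    have h3 : ∑ j ∈ univ.filter (fun j => x j = 1), x j
        = ∑ _j ∈ univ.filter (fun j => x j = 1), (1 : ZMod 2) :=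
      Finset.sum_congr rfl fun j hj => (Finset.mem_filter.mp hj).2
    rw [h2, add_zero, h3, Finset.sum_const, nsmul_eq_mul, mul_one]
  rw [h1, ZMod.natCast_eq_zero_iff, even_iff_two_dvd]

lemma mem_Jset_iff (m : ℕ) (x : Fin (m+2) → ZMod 2) :
    x ∈ Jset m ↔ par x = 0 ∧ x (Fin.last (m+1)) = 0 := by
  rw [Jset, Set.mem_setOf_eq, even_iff_par]

lemma par_compl (m : ℕ) (hm : Even m) (x : Fin (m+2) → ZMod 2) :
    par (compl' m x) = par x := by
  unfold par compl'
  rw [Finset.sum_add_distrib, Finset.sum_const, Finset.card_univ, Fintype.card_fin,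
    nsmul_eq_mul, mul_one]
  have : ((m + 2 : ℕ) : ZMod 2) = 0 := by
    rw [ZMod.natCast_eq_zero_iff]
    obtain ⟨k, rfl⟩ := hm
    omega
  rw [this, add_zero]

lemma compl'_ne (m : ℕ) {x x' : Fin (m+2) → ZMod 2} (hx : x (Fin.last (m+1)) = 0)
    (hx' : x' (Fin.last (m+1)) = 0) : x ≠ compl' m x' := by
  intro h
  have := congrFun h (Fin.last (m+1))
  rw [hx] at this
  unfold compl' at this
  rw [hx'] at this
  exact absurd this.symm (by decide)

lemma compl'_inj (m : ℕ) {x x' : Fin (m+2) → ZMod 2} :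
    compl' m x = compl' m x' ↔ x = x' := by
  constructor
  · intro h
    funext k
    have := congrFun h k
    unfold compl' at this
    exact add_right_cancel this
  · rintro rfl; rfl

lemma eq_of_off_eq {m : ℕ} {ℓ : Fin (m+2)} {a b : Fin (m+2) → ZMod 2}
    (h : ∀ k, k ≠ ℓ → a k = b k) (hpar : par a = par b) : a = b := by
  have key : ∀ f : Fin (m+2) → ZMod 2, par f + f ℓ = ∑ k ∈ univ.erase ℓ, f k := by
    intro f
    rw [par, ← Finset.add_sum_erase univ f (Finset.mem_univ ℓ), add_comm (f ℓ) _,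
      add_assoc, zmod2_add_self, add_zero]
  have hsum : par a + a ℓ = par b + b ℓ := by
    rw [key a, key b]
    exact Finset.sum_congr rfl fun k hk => h k (Finset.ne_of_mem_erase hk)
  rw [hpar] at hsum
  have hab : a ℓ = b ℓ := add_left_cancel hsum
  funext k
  by_cases hk : k = ℓ
  · rw [hk]; exact hab
  · exact h k hk

lemma entry_offdiag {m : ℕ} {P : Matrix (ZMod 2) (ZMod 2) ℂ}
    (hP0 : P 0 0 = 0) (hP1 : P 1 1 = 0) (ℓ : Fin (m+2))
    {a b : Fin (m+2) → ZMod 2} (i j : ZMod 2) (ha : par a = 0) (hb : par b = 0) :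
    opAt (m+3) ℓ.castSucc P (Fin.snoc a i) (Fin.snoc b j) = 0 := by
  rw [opAt_castSucc]
  split_ifs with h
  · obtain rfl : a = b := eq_of_off_eq h.2 (ha.trans hb.symm)
    rcases zmod2_cases (a ℓ) with h' | h' <;> rw [h'] <;> assumption
  · rfl

lemma entry_diag {m : ℕ} {P : Matrix (ZMod 2) (ZMod 2) ℂ}
    (hP0 : P 0 1 = 0) (hP1 : P 1 0 = 0) (ℓ : Fin (m+2))
    {a b : Fin (m+2) → ZMod 2} (i j : ZMod 2) (ha : par a = 0) (hb : par b = 0) :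
    opAt (m+3) ℓ.castSucc P (Fin.snoc a i) (Fin.snoc b j)
      = if i = j ∧ a = b then P (a ℓ) (a ℓ) else 0 := by
  rw [opAt_castSucc]
  by_cases h : i = j ∧ ∀ k, k ≠ ℓ → a k = b k
  · obtain rfl : a = b := eq_of_off_eq h.2 (ha.trans hb.symm)
    rw [if_pos h, if_pos ⟨h.1, rfl⟩]
  · rw [if_neg h, eq_comm]
    by_cases h2 : i = j ∧ a = b
    · exact absurd ⟨h2.1, fun k _ => by rw [h2.2]⟩ h
    · rw [if_neg h2]

lemma trace_pair {P : Matrix (ZMod 2) (ZMod 2) ℂ} (htr : P 0 0 + P 1 1 = 0)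
    (t : ZMod 2) : P t t + P (t+1) (t+1) = 0 := by
  rcases zmod2_cases t with h | h <;> subst h
  · simpa using htr
  · show P 1 1 + P (1+1) (1+1) = 0
    have : (1 + 1 : ZMod 2) = 0 := by decide
    rw [this, add_comm]; exact htr

end Helpers
section InnerLast

variable {m : ℕ} {P : Matrix (ZMod 2) (ZMod 2) ℂ} {x x' : Fin (m+2) → ZMod 2}

lemma inner_last_00 (hx : x ∈ Jset m) (hx' : x' ∈ Jset m) :
    ⟪c0 m x, Matrix.toEuclideanLin (opAt (m+3) (Fin.last (m+2)) P) (c0 m x')⟫_ℂ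
      = if x = x' then (P 0 0 + P 0 1 + P 1 0 + P 1 1) / 2 else 0 := by
  rw [mem_Jset_iff] at hx hx'
  have h1 : x ≠ compl' m x' := compl'_ne m hx.2 hx'.2
  have h2 : compl' m x ≠ x' := fun h => compl'_ne m hx'.2 hx.2 (by rw [← h])
  simp only [c0, inner_smul_left, inner_smul_right, map_add, map_sub, _root_.map_smul,
    inner_add_left, inner_add_right, inner_sub_left, inner_sub_right, smul_add, smul_sub,
    inner_bvec_toEuclideanLin, opAt_last, map_div₀, _root_.map_one, map_ofNat]
  by_cases hxx : x = x'
  · subst hxx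
    simp only [if_pos rfl, if_neg h1, if_neg h2, compl'_inj, if_true]
    ring
  · have h3 : ¬ compl' m x = compl' m x' := fun h => hxx (compl'_inj m |>.mp h)
    simp only [if_neg hxx, if_neg h1, if_neg h2, if_neg h3]
    ring


lemma inner_last_11 (hx : x ∈ Jset m) (hx' : x' ∈ Jset m) :
    ⟪c1 m x, Matrix.toEuclideanLin (opAt (m+3) (Fin.last (m+2)) P) (c1 m x')⟫_ℂ
      = if x = x' then (P 0 0 - P 0 1 - P 1 0 + P 1 1) / 2 else 0 := by
  rw [mem_Jset_iff] at hx hx'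
  have h1 : x ≠ compl' m x' := compl'_ne m hx.2 hx'.2
  have h2 : compl' m x ≠ x' := fun h => compl'_ne m hx'.2 hx.2 (by rw [← h])
  simp only [c1, inner_smul_left, inner_smul_right, map_add, map_sub, _root_.map_smul,
    inner_add_left, inner_add_right, inner_sub_left, inner_sub_right, smul_add, smul_sub,
    inner_bvec_toEuclideanLin, opAt_last, map_div₀, _root_.map_one, map_ofNat]
  by_cases hxx : x = x'
  · subst hxx
    simp only [if_pos rfl, if_neg h1, if_neg h2, compl'_inj, if_true]
    ring
  · have h3 : ¬ compl' m x = compl' m x' := fun h => hxx (compl'_inj m |>.mp h)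
    simp only [if_neg hxx, if_neg h1, if_neg h2, if_neg h3]
    ring

lemma inner_last_01 (hx : x ∈ Jset m) (hx' : x' ∈ Jset m) :
    ⟪c0 m x, Matrix.toEuclideanLin (opAt (m+3) (Fin.last (m+2)) P) (c1 m x')⟫_ℂ = 0 := by
  rw [mem_Jset_iff] at hx hx'
  have h1 : x ≠ compl' m x' := compl'_ne m hx.2 hx'.2
  have h2 : compl' m x ≠ x' := fun h => compl'_ne m hx'.2 hx.2 (by rw [← h])
  simp only [c0, c1, inner_smul_left, inner_smul_right, map_add, map_sub, _root_.map_smul,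
    inner_add_left, inner_add_right, inner_sub_left, inner_sub_right, smul_add, smul_sub,
    inner_bvec_toEuclideanLin, opAt_last, map_div₀, _root_.map_one, map_ofNat]
  by_cases hxx : x = x'
  · subst hxx
    simp only [if_pos rfl, if_neg h1, if_neg h2, compl'_inj, if_true]
    ring
  · have h3 : ¬ compl' m x = compl' m x' := fun h => hxx (compl'_inj m |>.mp h)
    simp only [if_neg hxx, if_neg h1, if_neg h2, if_neg h3]
    ring

lemma inner_last_10 (hx : x ∈ Jset m) (hx' : x' ∈ Jset m) :
    ⟪c1 m x, Matrix.toEuclideanLin (opAt (m+3) (Fin.last (m+2)) P) (c0 m x')⟫_ℂ = 0 := by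
  rw [mem_Jset_iff] at hx hx'
  have h1 : x ≠ compl' m x' := compl'_ne m hx.2 hx'.2
  have h2 : compl' m x ≠ x' := fun h => compl'_ne m hx'.2 hx.2 (by rw [← h])
  simp only [c0, c1, inner_smul_left, inner_smul_right, map_add, map_sub, _root_.map_smul,
    inner_add_left, inner_add_right, inner_sub_left, inner_sub_right, smul_add, smul_sub,
    inner_bvec_toEuclideanLin, opAt_last, map_div₀, _root_.map_one, map_ofNat]
  by_cases hxx : x = x'
  · subst hxx
    simp only [if_pos rfl, if_neg h1, if_neg h2, compl'_inj, if_true]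
    ring
  · have h3 : ¬ compl' m x = compl' m x' := fun h => hxx (compl'_inj m |>.mp h)
    simp only [if_neg hxx, if_neg h1, if_neg h2, if_neg h3]
    ring
end InnerLast
section InnerCast

variable {m : ℕ} {P : Matrix (ZMod 2) (ZMod 2) ℂ} {x x' : Fin (m+2) → ZMod 2}

/-- For an off-diagonal `P` acting on one of the first `m+2` qubits, all matrix elements
between the code vectors vanish. -/
lemma inner_cast_offdiag (hm : Even m) (ℓ : Fin (m+2)) (hP0 : P 0 0 = 0) (hP1 : P 1 1 = 0)
    (hx : x ∈ Jset m) (hx' : x' ∈ Jset m)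
    (u : Bool) (v : Bool) :
    ⟪(if u then c0 m x else c1 m x),
      Matrix.toEuclideanLin (opAt (m+3) ℓ.castSucc P)
        (if v then c0 m x' else c1 m x')⟫_ℂ = 0 := by
  rw [mem_Jset_iff] at hx hx'
  have hpx : par x = 0 := hx.1
  have hpx' : par x' = 0 := hx'.1
  have hpcx : par (compl' m x) = 0 := by rw [par_compl m hm]; exact hx.1
  have hpcx' : par (compl' m x') = 0 := by rw [par_compl m hm]; exact hx'.1
  cases u <;> cases v <;>
  · simp only [Bool.false_eq_true, if_true, if_false, c0, c1, inner_smul_left,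
      inner_smul_right, map_add, map_sub, _root_.map_smul,
      inner_add_left, inner_add_right, inner_sub_left, inner_sub_right, smul_add, smul_sub,
      inner_bvec_toEuclideanLin, entry_offdiag hP0 hP1, hpx, hpx', hpcx, hpcx',
      map_div₀, _root_.map_one, map_ofNat]
    ring

/-- For a traceless diagonal `P` acting on one of the first `m+2` qubits, all matrix
elements between the code vectors vanish. -/
lemma inner_cast_diag (hm : Even m) (ℓ : Fin (m+2)) (hP0 : P 0 1 = 0) (hP1 : P 1 0 = 0) (htr : P 0 0 + P 1 1 = 0)
    (hx : x ∈ Jset m) (hx' : x' ∈ Jset m)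
    (u : Bool) (v : Bool) :
    ⟪(if u then c0 m x else c1 m x),
      Matrix.toEuclideanLin (opAt (m+3) ℓ.castSucc P)
        (if v then c0 m x' else c1 m x')⟫_ℂ = 0 := by
  rw [mem_Jset_iff] at hx hx'
  have hpx : par x = 0 := hx.1
  have hpx' : par x' = 0 := hx'.1
  have hpcx : par (compl' m x) = 0 := by rw [par_compl m hm]; exact hx.1
  have hpcx' : par (compl' m x') = 0 := by rw [par_compl m hm]; exact hx'.1
  have h1 : x ≠ compl' m x' := compl'_ne m hx.2 hx'.2
  have h2 : compl' m x ≠ x' := fun h => compl'_ne m hx'.2 hx.2 (by rw [← h])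
  have htr' : P (x ℓ) (x ℓ) + P (x ℓ + 1) (x ℓ + 1) = 0 := trace_pair htr (x ℓ)
  have hcx : compl' m x ℓ = x ℓ + 1 := rfl
  cases u <;> cases v <;>
  · simp only [Bool.false_eq_true, if_true, if_false, c0, c1, inner_smul_left,
      inner_smul_right, map_add, map_sub, _root_.map_smul,
      inner_add_left, inner_add_right, inner_sub_left, inner_sub_right, smul_add, smul_sub,
      inner_bvec_toEuclideanLin, entry_diag hP0 hP1, hpx, hpx', hpcx, hpcx',
      map_div₀, _root_.map_one, map_ofNat]
    have hsub : P (x ℓ + 1) (x ℓ + 1) = -P (x ℓ) (x ℓ) :=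
      eq_neg_of_add_eq_zero_right (by linear_combination htr')
    by_cases hxx : x = x'
    · subst hxx
      simp only [if_pos rfl, and_true, true_and, if_true]
      simp only [hcx, hsub]
      simp [h1, h2]
      try ring
    · have h3 : ¬ compl' m x = compl' m x' := fun h => hxx (compl'_inj m |>.mp h)
      simp [hxx, h1, h2, h3]

end InnerCast
section Ortho

lemma opAt_one (n : ℕ) (ℓ : Fin n) :
    opAt n ℓ (1 : Matrix (ZMod 2) (ZMod 2) ℂ) = 1 := by
  funext y z
  unfold opAt
  by_cases h : y = z
  · subst h; simp [Matrix.one_apply]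
  · simp only [Matrix.one_apply, if_neg h]
    split_ifs with h1 h2
    · exact absurd (funext fun k => by
        by_cases hk : k = ℓ
        · rw [hk]; exact h2
        · exact h1 k hk) h
    · rfl
    · rfl

lemma toEuclideanLin_one {m : ℕ} (v : EuclideanSpace ℂ (Fin (m+3) → ZMod 2)) :
    Matrix.toEuclideanLin (1 : Matrix (Fin (m+3) → ZMod 2) (Fin (m+3) → ZMod 2) ℂ) v = v := by
  rw [Matrix.toEuclideanLin_apply, Matrix.one_mulVec]

variable {m : ℕ} {x x' : Fin (m+2) → ZMod 2}

lemma inner_c0_c0 (hx : x ∈ Jset m) (hx' : x' ∈ Jset m) :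
    ⟪c0 m x, c0 m x'⟫_ℂ = if x = x' then 1 else 0 := by
  have h := inner_last_00 (P := (1 : Matrix (ZMod 2) (ZMod 2) ℂ)) hx hx'
  rw [opAt_one] at h
  rw [toEuclideanLin_one] at h
  rw [h]
  norm_num [Matrix.one_apply]

lemma inner_c1_c1 (hx : x ∈ Jset m) (hx' : x' ∈ Jset m) :
    ⟪c1 m x, c1 m x'⟫_ℂ = if x = x' then 1 else 0 := by
  have h := inner_last_11 (P := (1 : Matrix (ZMod 2) (ZMod 2) ℂ)) hx hx'
  rw [opAt_one] at h
  rw [toEuclideanLin_one] at h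
  rw [h]
  norm_num [Matrix.one_apply]

lemma inner_c0_c1 (hx : x ∈ Jset m) (hx' : x' ∈ Jset m) :
    ⟪c0 m x, c1 m x'⟫_ℂ = 0 := by
  have h := inner_last_01 (P := (1 : Matrix (ZMod 2) (ZMod 2) ℂ)) hx hx'
  rw [opAt_one] at h
  rw [toEuclideanLin_one] at h
  exact h

end Ortho

section Spans

variable {E : Type*} [NormedAddCommGroup E] [InnerProductSpace ℂ E]

lemma span_inner_op_zero (A : E →ₗ[ℂ] E) {S T : Set E}
    (h : ∀ s ∈ S, ∀ t ∈ T, ⟪s, A t⟫_ℂ = 0) :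
    ∀ u ∈ Submodule.span ℂ S, ∀ v ∈ Submodule.span ℂ T, ⟪u, A v⟫_ℂ = 0 := by
  intro u hu
  induction hu using Submodule.span_induction with
  | mem s hs =>
    intro v hv
    induction hv using Submodule.span_induction with
    | mem t ht => exact h s hs t ht
    | zero => simp
    | add a b _ _ ha hb => rw [map_add, inner_add_right, ha, hb, add_zero]
    | smul r a _ ha => rw [_root_.map_smul, inner_smul_right, ha, mul_zero]
  | zero => intro v hv; simp
  | add a b _ _ ha hb => intro v hv; rw [inner_add_left, ha v hv, hb v hv, add_zero]
  | smul r a _ ha => intro v hv; rw [inner_smul_left, ha v hv, mul_zero]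

lemma span_inner_zero {S T : Set E}
    (h : ∀ s ∈ S, ∀ t ∈ T, ⟪s, t⟫_ℂ = 0) :
    ∀ u ∈ Submodule.span ℂ S, ∀ v ∈ Submodule.span ℂ T, ⟪u, v⟫_ℂ = 0 := by
  have := span_inner_op_zero (LinearMap.id : E →ₗ[ℂ] E) (S := S) (T := T) (by simpa using h)
  simpa using this

end Spans

section Count

lemma card_Jset (m : ℕ) [Fintype {x // x ∈ Jset m}] :
    Fintype.card {x // x ∈ Jset m} = 2 ^ m := by
  have e1 : {x // x ∈ Jset m} ≃ {y : Fin (m+1) → ZMod 2 // ∑ j, y j = 0} :=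
    { toFun := fun x => ⟨Fin.init x.1, by
        obtain ⟨hpar, hlast⟩ := (mem_Jset_iff m x.1).mp x.2
        have : par x.1 = ∑ j : Fin (m+1), Fin.init x.1 j + x.1 (Fin.last (m+1)) := by
          rw [par, Fin.sum_univ_castSucc]; rfl
        rw [hpar, hlast, add_zero] at this
        exact this.symm⟩
      invFun := fun y => ⟨Fin.snoc y.1 0, by
        rw [mem_Jset_iff]
        constructor
        · rw [par, Fin.sum_univ_castSucc]
          simp [y.2]
        · simp⟩
      left_inv := fun x => by
        ext1
        show (Fin.snoc (Fin.init x.1) 0 : Fin (m+2) → ZMod 2) = x.1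
        have hlast := ((mem_Jset_iff m x.1).mp x.2).2
        conv_rhs => rw [← Fin.snoc_init_self x.1]
        rw [hlast]
      right_inv := fun y => by
        ext1
        simp }
  have e2 : {y : Fin (m+1) → ZMod 2 // ∑ j, y j = 0} ≃ (Fin m → ZMod 2) :=
    { toFun := fun y => Fin.init y.1
      invFun := fun z => ⟨Fin.snoc z (∑ i, z i), by
        rw [Fin.sum_univ_castSucc]
        simp [zmod2_add_self]⟩
      left_inv := fun y => by
        ext1
        have h1 : ∑ j, y.1 j = ∑ j : Fin m, Fin.init y.1 j + y.1 (Fin.last m) := by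
          rw [Fin.sum_univ_castSucc]; rfl
        rw [y.2] at h1
        have h2 : y.1 (Fin.last m) = ∑ j : Fin m, Fin.init y.1 j := by
          have := congrArg (· + y.1 (Fin.last m)) h1
          simp only [zero_add] at this
          rw [this, add_assoc, zmod2_add_self, add_zero]
        conv_rhs => rw [← Fin.snoc_init_self y.1]
        rw [h2]
      right_inv := fun z => by simp }
  rw [Fintype.card_congr (e1.trans e2)]
  simp

end Count

/-- for odd `n = m + 3`, the spans `C₀` and `C₁` of the
`c0 x`, `c1 x` (`x ∈ J`) are orthogonal subspaces of `(ℂ²)^{⊗n}`, each of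
dimension `2^{n-3}`, and the hybrid code `{C₀, C₁}` detects every weight-one
Pauli error; hence there exists an `[[n, n−3 : 1, 2]]₂` hybrid code. -/
theorem stmt_9 (m : ℕ) (hodd : Odd (m + 3)) :
    ∃ C0sp C1sp : Submodule ℂ (EuclideanSpace ℂ (Fin (m + 3) → ZMod 2)),
      C0sp = Submodule.span ℂ (c0 m '' Jset m) ∧
      C1sp = Submodule.span ℂ (c1 m '' Jset m) ∧
      (∀ u ∈ C0sp, ∀ v ∈ C1sp, ⟪u, v⟫_ℂ = 0) ∧
      Module.finrank ℂ C0sp = 2 ^ m ∧ Module.finrank ℂ C1sp = 2 ^ m ∧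
      (∀ ℓ : Fin (m + 3), ∀ P ∈ ({sigmaX, sigmaY, sigmaZ} :
          Set (Matrix (ZMod 2) (ZMod 2) ℂ)),
        (∀ u ∈ C0sp, ∀ v ∈ C1sp,
          ⟪u, Matrix.toEuclideanLin (opAt (m + 3) ℓ P) v⟫_ℂ = 0) ∧
        (∀ u ∈ C1sp, ∀ v ∈ C0sp,
          ⟪u, Matrix.toEuclideanLin (opAt (m + 3) ℓ P) v⟫_ℂ = 0) ∧
        (∃ lam : ℂ, ∀ x ∈ Jset m, ∀ x' ∈ Jset m,
          ⟪c0 m x, Matrix.toEuclideanLin (opAt (m + 3) ℓ P) (c0 m x')⟫_ℂ =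
            if x = x' then lam else 0) ∧
        (∃ lam : ℂ, ∀ x ∈ Jset m, ∀ x' ∈ Jset m,
          ⟪c1 m x, Matrix.toEuclideanLin (opAt (m + 3) ℓ P) (c1 m x')⟫_ℂ =
            if x = x' then lam else 0)) := by
  have hm : Even m := by
    rcases hodd with ⟨k, hk⟩
    exact ⟨k - 1, by omega⟩
  haveI : Fintype {x // x ∈ Jset m} := Fintype.ofFinite _
  refine ⟨Submodule.span ℂ (c0 m '' Jset m), Submodule.span ℂ (c1 m '' Jset m),
    rfl, rfl, ?_, ?_, ?_, ?_⟩
  · exact span_inner_zero (by rintro s ⟨x, hx, rfl⟩ t ⟨x', hx', rfl⟩; exact inner_c0_c1 hx hx')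
  · have horth : Orthonormal ℂ (fun x : {x // x ∈ Jset m} => c0 m x.1) := by
      rw [orthonormal_iff_ite]
      intro i j
      rw [inner_c0_c0 i.2 j.2]
      simp [Subtype.ext_iff]
    rw [Set.image_eq_range, finrank_span_eq_card horth.linearIndependent, card_Jset]
  · have horth : Orthonormal ℂ (fun x : {x // x ∈ Jset m} => c1 m x.1) := by
      rw [orthonormal_iff_ite]
      intro i j
      rw [inner_c1_c1 i.2 j.2]
      simp [Subtype.ext_iff]
    rw [Set.image_eq_range, finrank_span_eq_card horth.linearIndependent, card_Jset]
  · intro ℓ P hP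
    have hPcases : (P 0 0 = 0 ∧ P 1 1 = 0) ∨ (P 0 1 = 0 ∧ P 1 0 = 0 ∧ P 0 0 + P 1 1 = 0) := by
      rcases hP with rfl | rfl | rfl
      · left; constructor <;> simp [sigmaX]
      · left; constructor <;> simp [sigmaY]
      · right; refine ⟨?_, ?_, ?_⟩ <;> norm_num [sigmaZ]
    rcases Fin.eq_castSucc_or_eq_last ℓ with ⟨ℓ', rfl⟩ | rfl
    · have key : ∀ (u v : Bool), ∀ x ∈ Jset m, ∀ x' ∈ Jset m,
          ⟪(if u then c0 m x else c1 m x),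
            Matrix.toEuclideanLin (opAt (m+3) ℓ'.castSucc P)
              (if v then c0 m x' else c1 m x')⟫_ℂ = 0 := by
        intro u v x hx x' hx'
        rcases hPcases with ⟨h0, h1⟩ | ⟨h0, h1, h2⟩
        · exact inner_cast_offdiag hm ℓ' h0 h1 hx hx' u v
        · exact inner_cast_diag hm ℓ' h0 h1 h2 hx hx' u v
      refine ⟨?_, ?_, ⟨0, ?_⟩, ⟨0, ?_⟩⟩
      · exact span_inner_op_zero _ (by
          rintro s ⟨x, hx, rfl⟩ t ⟨x', hx', rfl⟩
          simpa using key true false x hx x' hx')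
      · exact span_inner_op_zero _ (by
          rintro s ⟨x, hx, rfl⟩ t ⟨x', hx', rfl⟩
          simpa using key false true x hx x' hx')
      · intro x hx x' hx'
        rw [ite_self]
        simpa using key true true x hx x' hx'
      · intro x hx x' hx'
        rw [ite_self]
        simpa using key false false x hx x' hx'
    · refine ⟨?_, ?_, ⟨(P 0 0 + P 0 1 + P 1 0 + P 1 1) / 2, ?_⟩,
        ⟨(P 0 0 - P 0 1 - P 1 0 + P 1 1) / 2, ?_⟩⟩
      · exact span_inner_op_zero _ (by
          rintro s ⟨x, hx, rfl⟩ t ⟨x', hx', rfl⟩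
          exact inner_last_01 hx hx')
      · exact span_inner_op_zero _ (by
          rintro s ⟨x, hx, rfl⟩ t ⟨x', hx', rfl⟩
          exact inner_last_10 hx hx')
      · intro x hx x' hx'
        exact inner_last_00 hx hx'
      · intro x hx x' hx'
        exact inner_last_11 hx hx'
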